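/- arXiv:2212.10821 — 4 statements merged into one kernel-verified Lean document; each statement's English description precedes it below -/
import Mathlib

section
/- Let H, C : [0,∞) → Matrix (Fin n) (Fin n) ℂ be continuous with H(t) Hermitian positive definite and C(t) Hermitian with minimal eigenvalue c_min(t) > 0. Suppose y : [0,∞) → ℂⁿ is differentiable and d/dt ⟨H(t)y(t), y(t)⟩ = -⟨C(t)y(t), y(t)⟩. Then ⟨H(t)y(t), y(t)⟩ ≤ exp(-∫₀ᵗ c_min(s)/‖H(s)‖ ds) · ⟨H(0)y(0), y(0)⟩ for t ≥ 0. -/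
open Matrix
open scoped ComplexOrder intervalIntegral
open scoped Matrix.Norms.L2Operator

lemma rayleigh_lower {n : ℕ} {A : Matrix (Fin n) (Fin n) ℂ} (hA : A.IsHermitian)
    {μ : ℝ} (hμ : ∀ i, μ ≤ hA.eigenvalues i) (x : Fin n → ℂ) :
    μ * (star x ⬝ᵥ x).re ≤ (star x ⬝ᵥ A *ᵥ x).re := by
  classical
  set U : Matrix (Fin n) (Fin n) ℂ := (hA.eigenvectorUnitary : Matrix (Fin n) (Fin n) ℂ)
  have hUU : U * star U = 1 := Matrix.mem_unitaryGroup_iff.mp hA.eigenvectorUnitary.2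
  have hB : A - (μ:ℂ) • 1 =
      U * diagonal (fun i => ((hA.eigenvalues i - μ : ℝ) : ℂ)) * star U := by
    conv_lhs => rw [hA.spectral_theorem, Unitary.conjStarAlgAut_apply]
    have h1 : (μ:ℂ) • (1 : Matrix (Fin n) (Fin n) ℂ)
        = U * ((μ:ℂ) • (1 : Matrix (Fin n) (Fin n) ℂ)) * star U := by
      rw [Matrix.mul_smul, Matrix.smul_mul, mul_one, hUU]
    rw [h1, ← Matrix.sub_mul, ← Matrix.mul_sub]
    congr 1
    congr 1
    rw [smul_one_eq_diagonal, diagonal_sub]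
    ext i j
    rcases eq_or_ne i j with rfl | h
    · simp only [Matrix.diagonal_apply_eq, Function.comp_apply, Complex.ofReal_sub]
      rw [sub_eq_neg_add]
      exact add_comm _ _
    · simp [Matrix.diagonal_apply_ne _ h]
  have hps : Matrix.PosSemidef (A - (μ:ℂ) • 1) := by
    rw [hB]
    exact (Matrix.posSemidef_diagonal_iff.mpr fun i => by
      rw [Complex.zero_le_real]; linarith [hμ i]).mul_mul_conjTranspose_same U
  have h0 := hps.re_dotProduct_nonneg x
  have hexp : (star x ⬝ᵥ (A - (μ:ℂ) • 1) *ᵥ x)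
      = star x ⬝ᵥ A *ᵥ x - (μ:ℂ) * (star x ⬝ᵥ x) := by
    rw [Matrix.sub_mulVec, dotProduct_sub, smul_mulVec, one_mulVec, dotProduct_smul,
      smul_eq_mul]
  rw [hexp] at h0
  simp only [map_sub, RCLike.re_eq_complex_re, Complex.sub_re, Complex.mul_re,
    Complex.ofReal_re, Complex.ofReal_im, zero_mul, sub_zero] at h0
  linarith

lemma dot_abs_le {n : ℕ} (A : Matrix (Fin n) (Fin n) ℂ) (x : Fin n → ℂ) :
    |(star x ⬝ᵥ A *ᵥ x).re| ≤ ‖A‖ * (star x ⬝ᵥ x).re := by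
  let x' : EuclideanSpace ℂ (Fin n) := (WithLp.equiv 2 _).symm x
  have h1 : (star x ⬝ᵥ A *ᵥ x) = inner ℂ x' ((WithLp.equiv 2 _).symm (A *ᵥ x)) := by
    rw [dotProduct_comm]; rfl
  have h2 : (star x ⬝ᵥ x : ℂ).re = ‖x'‖ ^ 2 := by
    have := EuclideanSpace.inner_toLp_toLp (𝕜 := ℂ) (ι := Fin n) x x
    rw [dotProduct_comm, ← this, inner_self_eq_norm_sq_to_K]
    norm_cast
  have h3 : ‖(EuclideanSpace.equiv (Fin n) ℂ).symm (A *ᵥ x)‖ ≤ ‖A‖ * ‖x'‖ :=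
    Matrix.l2_opNorm_mulVec A x'
  calc |(star x ⬝ᵥ A *ᵥ x).re| ≤ ‖(star x ⬝ᵥ A *ᵥ x : ℂ)‖ := Complex.abs_re_le_norm _
    _ = ‖(inner ℂ x' ((WithLp.equiv 2 _).symm (A *ᵥ x)) : ℂ)‖ := by rw [h1]
    _ ≤ ‖x'‖ * ‖(WithLp.equiv 2 ((Fin n) → ℂ)).symm (A *ᵥ x)‖ := norm_inner_le_norm _ _
    _ ≤ ‖x'‖ * (‖A‖ * ‖x'‖) := by
        refine mul_le_mul_of_nonneg_left ?_ (norm_nonneg _)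
        exact h3
    _ = ‖A‖ * ‖x'‖ ^ 2 := by ring
    _ = ‖A‖ * (star x ⬝ᵥ x).re := by rw [h2]

lemma cmin_sub_le {n : ℕ} {A B : Matrix (Fin n) (Fin n) ℂ} (hA : A.IsHermitian)
    (hB : B.IsHermitian) {a b : ℝ} (ha : IsLeast (Set.range hA.eigenvalues) a)
    (hb : IsLeast (Set.range hB.eigenvalues) b) :
    a - b ≤ ‖A - B‖ := by
  obtain ⟨i, hi⟩ := hb.1
  set v : Fin n → ℂ := ⇑(hB.eigenvectorBasis i) with hv
  have hv1 : (star v ⬝ᵥ v : ℂ).re = 1 := by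
    have h := EuclideanSpace.inner_toLp_toLp (𝕜 := ℂ) (ι := Fin n) v v
    have hnorm : ‖hB.eigenvectorBasis i‖ = 1 := hB.eigenvectorBasis.orthonormal.1 i
    have : (inner ℂ (hB.eigenvectorBasis i) (hB.eigenvectorBasis i) : ℂ) = star v ⬝ᵥ v := by
      rw [dotProduct_comm]; rfl
    rw [← this, inner_self_eq_norm_sq_to_K, hnorm]
    norm_num
  have hBv : (star v ⬝ᵥ B *ᵥ v : ℂ).re = b := by
    rw [← hi, hB.eigenvalues_eq i]
    rfl
  have h1 : a ≤ (star v ⬝ᵥ A *ᵥ v : ℂ).re := by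
    have := rayleigh_lower hA (fun j => ha.2 ⟨j, rfl⟩) v
    rw [hv1] at this
    linarith
  have h2 : (star v ⬝ᵥ (A - B) *ᵥ v : ℂ) = star v ⬝ᵥ A *ᵥ v - star v ⬝ᵥ B *ᵥ v := by
    rw [Matrix.sub_mulVec, dotProduct_sub]
  have h3 := dot_abs_le (A - B) v
  rw [hv1, mul_one, h2] at h3
  have h4 := (abs_le.mp h3).2
  rw [Complex.sub_re, hBv] at h4
  linarith

theorem krein_type_estimate_inner (n : ℕ)
    (H C : ℝ → Matrix (Fin n) (Fin n) ℂ)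
    (hHcont : ContinuousOn H (Set.Ici (0:ℝ))) (hCcont : ContinuousOn C (Set.Ici (0:ℝ)))
    (hHpos : ∀ t ≥ (0:ℝ), (H t).PosDef)
    (hCherm : ∀ t ≥ (0:ℝ), (C t).IsHermitian)
    (cmin : ℝ → ℝ)
    (hcmin : ∀ t (ht : t ≥ (0:ℝ)),
      IsLeast (Set.range (hCherm t ht).eigenvalues) (cmin t))
    (hcminpos : ∀ t ≥ (0:ℝ), 0 < cmin t)
    (y : ℝ → Fin n → ℂ)
    (hydiff : Differentiable ℝ y)
    (hident : ∀ t ≥ (0:ℝ),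
      HasDerivAt (fun s => (star (y s) ⬝ᵥ (H s).mulVec (y s)).re)
        (-(star (y t) ⬝ᵥ (C t).mulVec (y t)).re) t) :
    ∀ t ≥ (0:ℝ),
      (star (y t) ⬝ᵥ (H t).mulVec (y t)).re
        ≤ Real.exp (-∫ s in (0:ℝ)..t, cmin s / ‖H s‖)
            * (star (y 0) ⬝ᵥ (H 0).mulVec (y 0)).re := by
  -- notation
  set V : ℝ → ℝ := fun s => (star (y s) ⬝ᵥ (H s).mulVec (y s)).re with hV
  set f : ℝ → ℝ := fun s => cmin s / ‖H s‖ with hf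
  set G : ℝ → ℝ := fun u => ∫ s in (0:ℝ)..u, f s with hG
  -- n cannot be 0
  rcases Nat.eq_zero_or_pos n with hn | hn
  · obtain ⟨i, -⟩ := (hcmin 0 le_rfl).1
    exact absurd i.isLt (by omega)
  -- ‖H s‖ > 0
  have hHnorm : ∀ s ∈ Set.Ici (0:ℝ), 0 < ‖H s‖ := by
    intro s hs
    rw [norm_pos_iff]
    intro h0
    have hx : (Pi.single (⟨0, hn⟩ : Fin n) 1 : Fin n → ℂ) ≠ 0 := by
      intro h
      have := congrFun h ⟨0, hn⟩
      simp at this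
    have := (hHpos s hs).dotProduct_mulVec_pos hx
    rw [h0] at this
    simp at this
  -- cmin is continuous on Ici 0
  have hcmincont : ContinuousOn cmin (Set.Ici (0:ℝ)) := by
    intro s hs
    rw [Metric.continuousWithinAt_iff]
    intro ε hε
    have hC := hCcont s hs
    replace hC := Metric.continuousWithinAt_iff.mp hC
    obtain ⟨δ, hδ, hd⟩ := hC ε hε
    refine ⟨δ, hδ, fun {x} hx hxs => lt_of_le_of_lt ?_ (hd hx hxs)⟩
    rw [Real.dist_eq, abs_le, dist_eq_norm]
    constructor
    · have h2 := cmin_sub_le (hCherm s hs) (hCherm x hx) (hcmin s hs) (hcmin x hx)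
      rw [norm_sub_rev] at h2
      linarith
    · exact cmin_sub_le (hCherm x hx) (hCherm s hs) (hcmin x hx) (hcmin s hs)
  -- f is continuous on Ici 0
  have hfcont : ContinuousOn f (Set.Ici (0:ℝ)) := by
    apply hcmincont.div (continuous_norm.comp_continuousOn hHcont)
    exact fun s hs => (hHnorm s hs).ne'
  -- main part
  intro t ht
  rcases eq_or_lt_of_le ht with rfl | htpos
  · simp [hG, hV]
  have hsub : Set.Icc (0:ℝ) t ⊆ Set.Ici (0:ℝ) := fun u hu => hu.1
  -- W is antitone on Icc 0 t
  have hint : MeasureTheory.IntegrableOn f (Set.uIcc (0:ℝ) t) := by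
    apply ContinuousOn.integrableOn_uIcc
    rw [Set.uIcc_of_le ht]
    exact hfcont.mono hsub
  have hGcont : ContinuousOn G (Set.Icc (0:ℝ) t) := by
    have := intervalIntegral.continuousOn_primitive_interval hint
    rwa [Set.uIcc_of_le ht] at this
  have hVcont : ContinuousOn V (Set.Icc (0:ℝ) t) := fun u hu =>
    ((hident u hu.1).continuousAt).continuousWithinAt
  have hW : AntitoneOn (fun u => V u * Real.exp (G u)) (Set.Icc (0:ℝ) t) := by
    apply antitoneOn_of_deriv_nonpos (convex_Icc 0 t)
      (hVcont.mul (Real.continuous_exp.comp_continuousOn hGcont))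
    · rw [interior_Icc]
      intro u hu
      have hu0 : (0:ℝ) ≤ u := hu.1.le
      have hGd : HasDerivAt G (f u) u := by
        apply intervalIntegral.integral_hasDerivAt_right
        · apply ContinuousOn.intervalIntegrable
          apply hfcont.mono
          rw [Set.uIcc_of_le hu0]
          exact fun z hz => hz.1
        · exact ContinuousOn.stronglyMeasurableAtFilter isOpen_Ioi
            (hfcont.mono (fun z hz => le_of_lt hz)) u hu.1
        · exact hfcont.continuousAt (Ici_mem_nhds hu.1)
      exact ((hident u hu0).mul (hGd.exp)).differentiableAt.differentiableWithinAt
    · rw [interior_Icc]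
      intro u hu
      have hu0 : (0:ℝ) ≤ u := hu.1.le
      have hGd : HasDerivAt G (f u) u := by
        apply intervalIntegral.integral_hasDerivAt_right
        · apply ContinuousOn.intervalIntegrable
          apply hfcont.mono
          rw [Set.uIcc_of_le hu0]
          exact fun z hz => hz.1
        · exact ContinuousOn.stronglyMeasurableAtFilter isOpen_Ioi
            (hfcont.mono (fun z hz => le_of_lt hz)) u hu.1
        · exact hfcont.continuousAt (Ici_mem_nhds hu.1)
      have hWd : HasDerivAt (fun u => V u * Real.exp (G u))
          (-(star (y u) ⬝ᵥ (C u).mulVec (y u)).re * Real.exp (G u)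
            + V u * (Real.exp (G u) * f u)) u := (hident u hu0).mul (hGd.exp)
      simp only [Function.comp_def]
      change deriv (fun u => V u * Real.exp (G u)) u ≤ 0
      rw [hWd.deriv]
      -- key inequality
      have hq : (0:ℝ) ≤ (star (y u) ⬝ᵥ (y u) : ℂ).re := by
        have h := dotProduct_star_self_nonneg (y u)
        exact (Complex.le_def.mp h).1
      have hray : cmin u * (star (y u) ⬝ᵥ (y u) : ℂ).re
          ≤ (star (y u) ⬝ᵥ (C u).mulVec (y u)).re :=
        rayleigh_lower (hCherm u hu0)
          (fun j => (hcmin u hu0).2 (Set.mem_range_self j)) (y u)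
      have hVle : V u ≤ ‖H u‖ * (star (y u) ⬝ᵥ (y u) : ℂ).re :=
        le_trans (le_abs_self _) (dot_abs_le (H u) (y u))
      have hf0 : 0 ≤ f u := le_of_lt (div_pos (hcminpos u hu0) (hHnorm u hu0))
      have hH0 : 0 < ‖H u‖ := hHnorm u hu0
      have key : V u * f u ≤ (star (y u) ⬝ᵥ (C u).mulVec (y u)).re := by
        calc V u * f u ≤ (‖H u‖ * (star (y u) ⬝ᵥ (y u) : ℂ).re) * f u :=
              mul_le_mul_of_nonneg_right hVle hf0
          _ = cmin u * (star (y u) ⬝ᵥ (y u) : ℂ).re := by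
              rw [hf]; field_simp
          _ ≤ _ := hray
      have he : (0:ℝ) < Real.exp (G u) := Real.exp_pos _
      nlinarith [key, he]
  -- conclude
  have h0mem : (0:ℝ) ∈ Set.Icc (0:ℝ) t := ⟨le_rfl, ht⟩
  have htmem : t ∈ Set.Icc (0:ℝ) t := ⟨ht, le_rfl⟩
  have := hW h0mem htmem ht
  rw [hG] at this
  simp only [intervalIntegral.integral_same, Real.exp_zero, mul_one] at this
  -- V t * exp (G t) ≤ V 0
  show V t ≤ Real.exp (-(G t)) * V 0
  rw [Real.exp_neg, inv_mul_eq_div, le_div_iff₀ (Real.exp_pos _)]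
  rw [hG]
  exact this
end

section
/- Under the hypotheses of the previous statement, with h_min(t) > 0 the minimal eigenvalue of H(t), solutions satisfy ‖y(t)‖² ≤ (‖H(0)‖/h_min(t)) ‖y(0)‖² exp(-∫₀ᵗ c_min(s)/‖H(s)‖ ds) for t ≥ 0. -/
open Matrix
open scoped ComplexOrder intervalIntegral
open scoped Matrix.Norms.L2Operator

section Helpers
variable {n : ℕ}


theorem quad_lower {A : Matrix (Fin n) (Fin n) ℂ} (hA : A.IsHermitian) {μ : ℝ}
    (hμ : ∀ i, μ ≤ hA.eigenvalues i) (x : Fin n → ℂ) :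
    μ * (star x ⬝ᵥ x).re ≤ (star x ⬝ᵥ A *ᵥ x).re := by
  set U : Matrix (Fin n) (Fin n) ℂ := (hA.eigenvectorUnitary : Matrix (Fin n) (Fin n) ℂ)
  have hps : (A - (μ:ℂ) • 1).PosSemidef := by
    have hU : U * star U = 1 := Matrix.mem_unitaryGroup_iff.mp (hA.eigenvectorUnitary).2
    have h1 : A - (μ:ℂ) • 1
        = U * diagonal (fun i => ((hA.eigenvalues i - μ : ℝ) : ℂ)) * star U := by
      conv_lhs => rw [hA.spectral_theorem, Unitary.conjStarAlgAut_apply]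
      have : (μ:ℂ) • (1 : Matrix (Fin n) (Fin n) ℂ) = U * ((μ:ℂ) • 1) * star U := by
        rw [mul_smul_comm, mul_one, smul_mul_assoc, hU]
      rw [this, ← Matrix.sub_mul, ← Matrix.mul_sub, smul_one_eq_diagonal, diagonal_sub]
      have hd : (fun i => ((RCLike.ofReal ∘ hA.eigenvalues) i : ℂ) - (fun _ => (μ:ℂ)) i)
          = fun i => ((hA.eigenvalues i - μ : ℝ) : ℂ) := by
        funext i; simp
      rw [hd]
    rw [h1]
    exact (posSemidef_diagonal_iff.mpr (fun i => by
      simpa using sub_nonneg.mpr (hμ i))).mul_mul_conjTranspose_same U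
  have h0 := hps.dotProduct_mulVec_nonneg x
  have him : (0:ℂ) ≤ star x ⬝ᵥ (A - (μ:ℂ) • 1) *ᵥ x := h0
  rw [Complex.le_def] at him
  have hre := him.1
  simp only [Matrix.sub_mulVec, dotProduct_sub, Matrix.smul_mulVec,
    Matrix.one_mulVec, dotProduct_smul, Complex.sub_re, Complex.zero_re,
    smul_eq_mul, Complex.mul_re, Complex.ofReal_re, Complex.ofReal_im] at hre
  linarith

theorem quad_upper (A : Matrix (Fin n) (Fin n) ℂ) (x : Fin n → ℂ) :
    (star x ⬝ᵥ A *ᵥ x).re ≤ ‖A‖ * (star x ⬝ᵥ x).re := by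
  set x' : EuclideanSpace ℂ (Fin n) := (WithLp.equiv 2 _).symm x with hx'
  set z' : EuclideanSpace ℂ (Fin n) := (WithLp.equiv 2 _).symm (A *ᵥ x) with hz'
  have h1 : star x ⬝ᵥ A *ᵥ x = inner ℂ x' z' := by
    rw [EuclideanSpace.inner_eq_star_dotProduct, dotProduct_comm]; rfl
  have h2 : star x ⬝ᵥ x = inner ℂ x' x' := by
    rw [EuclideanSpace.inner_eq_star_dotProduct, dotProduct_comm]; rfl
  have h3 : ‖z'‖ ≤ ‖A‖ * ‖x'‖ := A.l2_opNorm_mulVec x'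
  have h4 : (inner ℂ x' z' : ℂ).re ≤ ‖x'‖ * ‖z'‖ := by
    calc (inner ℂ x' z' : ℂ).re ≤ ‖(inner ℂ x' z' : ℂ)‖ := Complex.re_le_norm _
    _ ≤ ‖x'‖ * ‖z'‖ := norm_inner_le_norm x' z'
  have h5 : (inner ℂ x' x' : ℂ).re = ‖x'‖ ^ 2 := by
    rw [inner_self_eq_norm_sq_to_K]
    norm_cast
  rw [h1, h2, h5]
  calc (inner ℂ x' z' : ℂ).re ≤ ‖x'‖ * ‖z'‖ := h4
  _ ≤ ‖x'‖ * (‖A‖ * ‖x'‖) := by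
      exact mul_le_mul_of_nonneg_left h3 (norm_nonneg _)
  _ = ‖A‖ * ‖x'‖ ^ 2 := by ring

theorem dot_self_re_eq_one {A : Matrix (Fin n) (Fin n) ℂ} (hA : A.IsHermitian) (i : Fin n) :
    (star ⇑(hA.eigenvectorBasis i) ⬝ᵥ ⇑(hA.eigenvectorBasis i)).re = 1 := by
  have h2 : star ⇑(hA.eigenvectorBasis i) ⬝ᵥ ⇑(hA.eigenvectorBasis i)
      = inner ℂ (hA.eigenvectorBasis i) (hA.eigenvectorBasis i) := by
    rw [EuclideanSpace.inner_eq_star_dotProduct, dotProduct_comm]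
  rw [h2, inner_self_eq_norm_sq_to_K, hA.eigenvectorBasis.orthonormal.1 i]
  norm_num

theorem eigmin_lipschitz {A B : Matrix (Fin n) (Fin n) ℂ} (hA : A.IsHermitian)
    (hB : B.IsHermitian) {μA μB : ℝ} (hμA : IsLeast (Set.range hA.eigenvalues) μA)
    (hμB : IsLeast (Set.range hB.eigenvalues) μB) : μB ≤ μA + ‖B - A‖ := by
  obtain ⟨i, hi⟩ := hμA.1
  set v : Fin n → ℂ := ⇑(hA.eigenvectorBasis i) with hv
  have hv1 : (star v ⬝ᵥ v).re = 1 := dot_self_re_eq_one hA i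
  have hlow : μB ≤ (star v ⬝ᵥ B *ᵥ v).re := by
    have := quad_lower hB (fun j => hμB.2 ⟨j, rfl⟩) v
    rwa [hv1, mul_one] at this
  have hsplit : (star v ⬝ᵥ B *ᵥ v).re
      = (star v ⬝ᵥ A *ᵥ v).re + (star v ⬝ᵥ (B - A) *ᵥ v).re := by
    rw [Matrix.sub_mulVec, dotProduct_sub, Complex.sub_re]; ring
  have hAv : (star v ⬝ᵥ A *ᵥ v).re = μA := by
    rw [← hi, hA.eigenvalues_eq]; rfl
  have hup : (star v ⬝ᵥ (B - A) *ᵥ v).re ≤ ‖B - A‖ := by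
    have := quad_upper (B - A) v
    rwa [hv1, mul_one] at this
  linarith [hsplit, hlow]

theorem eig_le_norm {A : Matrix (Fin n) (Fin n) ℂ} (hA : A.IsHermitian) (i : Fin n) :
    hA.eigenvalues i ≤ ‖A‖ := by
  have h := quad_upper A ⇑(hA.eigenvectorBasis i)
  rw [dot_self_re_eq_one hA i, mul_one] at h
  rw [hA.eigenvalues_eq]
  exact h

end Helpers

open MeasureTheory in
theorem krein_type_estimate_norm (n : ℕ)
    (H C : ℝ → Matrix (Fin n) (Fin n) ℂ)
    (hHcont : ContinuousOn H (Set.Ici (0:ℝ))) (hCcont : ContinuousOn C (Set.Ici (0:ℝ)))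
    (hHpos : ∀ t ≥ (0:ℝ), (H t).PosDef)
    (hCherm : ∀ t ≥ (0:ℝ), (C t).IsHermitian)
    (cmin hmin : ℝ → ℝ)
    (hcmin : ∀ t (ht : t ≥ (0:ℝ)),
      IsLeast (Set.range (hCherm t ht).eigenvalues) (cmin t))
    (hcminpos : ∀ t ≥ (0:ℝ), 0 < cmin t)
    (hhmin : ∀ t (ht : t ≥ (0:ℝ)),
      IsLeast (Set.range (hHpos t ht).1.eigenvalues) (hmin t))
    (hhminpos : ∀ t ≥ (0:ℝ), 0 < hmin t)
    (y : ℝ → Fin n → ℂ)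
    (hydiff : Differentiable ℝ y)
    (hident : ∀ t ≥ (0:ℝ),
      HasDerivAt (fun s => (star (y s) ⬝ᵥ (H s).mulVec (y s)).re)
        (-(star (y t) ⬝ᵥ (C t).mulVec (y t)).re) t) :
    ∀ t ≥ (0:ℝ),
      (star (y t) ⬝ᵥ y t).re
        ≤ (‖H 0‖ / hmin t) * (star (y 0) ⬝ᵥ y 0).re
            * Real.exp (-∫ s in (0:ℝ)..t, cmin s / ‖H s‖) := by
  intro t ht
  set Q : ℝ → ℝ := fun s => (star (y s) ⬝ᵥ y s).re with hQdef
  set V : ℝ → ℝ := fun s => (star (y s) ⬝ᵥ (H s).mulVec (y s)).re with hVdef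
  have hQnonneg : ∀ s, 0 ≤ Q s := by
    intro s
    have h := dotProduct_star_self_nonneg (y s)
    rw [Complex.le_def] at h
    simpa using h.1
  -- positivity of ‖H s‖
  have hnorm : ∀ s ∈ Set.Ici (0:ℝ), 0 < ‖H s‖ := by
    intro s hs
    obtain ⟨i, hi⟩ := (hhmin s hs).1
    exact lt_of_lt_of_le (hhminpos s hs) (hi ▸ eig_le_norm (hHpos s hs).1 i)
  -- continuity of cmin on Ici 0
  have hcmincont : ContinuousOn cmin (Set.Ici (0:ℝ)) := by
    intro a ha
    rw [Metric.continuousWithinAt_iff]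
    intro ε hε
    have hC := hCcont a ha
    rw [Metric.continuousWithinAt_iff] at hC
    obtain ⟨δ, hδ, hball⟩ := hC ε hε
    refine ⟨δ, hδ, fun {b} hb hdist => ?_⟩
    have h1 : cmin b ≤ cmin a + ‖C b - C a‖ :=
      eigmin_lipschitz (hCherm a ha) (hCherm b hb) (hcmin a ha) (hcmin b hb)
    have h2 : cmin a ≤ cmin b + ‖C a - C b‖ :=
      eigmin_lipschitz (hCherm b hb) (hCherm a ha) (hcmin b hb) (hcmin a ha)
    have h3 : dist (C b) (C a) < ε := hball hb hdist
    rw [dist_eq_norm] at h3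
    rw [Real.dist_eq, abs_sub_lt_iff]
    have h4 := norm_sub_rev (C a) (C b)
    constructor <;> linarith
  have hHn : ContinuousOn (fun s => ‖H s‖) (Set.Ici (0:ℝ)) :=
    continuous_norm.comp_continuousOn hHcont
  have hkcont : ContinuousOn (fun s => cmin s / ‖H s‖) (Set.Ici (0:ℝ)) :=
    hcmincont.div hHn (fun s hs => (hnorm s hs).ne')
  set g : ℝ → ℝ := fun s => ∫ u in (0:ℝ)..s, cmin u / ‖H u‖ with hgdef
  -- quadratic form bounds
  have hVlow : ∀ s ∈ Set.Ici (0:ℝ), hmin s * Q s ≤ V s := fun s hs =>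
    quad_lower (hHpos s hs).1 (fun i => (hhmin s hs).2 ⟨i, rfl⟩) (y s)
  have hVup : ∀ s, V s ≤ ‖H s‖ * Q s := fun s => quad_upper (H s) (y s)
  have hClow : ∀ s ∈ Set.Ici (0:ℝ),
      cmin s * Q s ≤ (star (y s) ⬝ᵥ (C s).mulVec (y s)).re := fun s hs =>
    quad_lower (hCherm s hs) (fun i => (hcmin s hs).2 ⟨i, rfl⟩) (y s)
  -- Gronwall
  have huIcc : Set.uIcc (0:ℝ) t = Set.Icc 0 t := Set.uIcc_of_le ht
  have hsub : Set.Icc (0:ℝ) t ⊆ Set.Ici 0 := Set.Icc_subset_Ici_self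
  have hkint : IntervalIntegrable (fun s => cmin s / ‖H s‖) volume 0 t :=
    (hkcont.mono (huIcc ▸ hsub)).intervalIntegrable
  have hgcont : ContinuousOn g (Set.Icc 0 t) := by
    rw [← huIcc]
    exact intervalIntegral.continuousOn_primitive_interval' hkint Set.left_mem_uIcc
  have hVcont : ContinuousOn V (Set.Icc 0 t) := fun s hs =>
    ((hident s (hsub hs)).continuousAt).continuousWithinAt
  have hWcont : ContinuousOn (fun s => V s * Real.exp (g s)) (Set.Icc 0 t) :=
    hVcont.mul (Real.continuous_exp.comp_continuousOn hgcont)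
  have hderiv : ∀ s ∈ Set.Ioo (0:ℝ) t,
      HasDerivAt (fun u => V u * Real.exp (g u))
        ((-(star (y s) ⬝ᵥ (C s).mulVec (y s)).re) * Real.exp (g s)
          + V s * (Real.exp (g s) * (cmin s / ‖H s‖))) s := by
    intro s hs
    have hkint' : IntervalIntegrable (fun u => cmin u / ‖H u‖) volume 0 s :=
      (hkcont.mono ((Set.uIcc_of_le hs.1.le) ▸ Set.Icc_subset_Ici_self)).intervalIntegrable
    have hkIoi : ContinuousOn (fun u => cmin u / ‖H u‖) (Set.Ioi (0:ℝ)) :=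
      hkcont.mono Set.Ioi_subset_Ici_self
    have hg' : HasDerivAt g (cmin s / ‖H s‖) s :=
      intervalIntegral.integral_hasDerivAt_right hkint'
        (hkIoi.stronglyMeasurableAtFilter isOpen_Ioi s hs.1)
        (hkIoi.continuousAt (isOpen_Ioi.mem_nhds hs.1))
    exact (hident s hs.1.le).mul hg'.exp
  have hanti : AntitoneOn (fun s => V s * Real.exp (g s)) (Set.Icc 0 t) := by
    refine antitoneOn_of_deriv_nonpos (convex_Icc 0 t) hWcont ?_ ?_
    · intro x hx
      rw [interior_Icc] at hx
      exact ((hderiv x hx).differentiableAt).differentiableWithinAt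
    · intro x hx
      rw [interior_Icc] at hx
      rw [(hderiv x hx).deriv]
      have hkv : (cmin x / ‖H x‖) * V x ≤ (star (y x) ⬝ᵥ (C x).mulVec (y x)).re := by
        have hknn : 0 ≤ cmin x / ‖H x‖ :=
          div_nonneg (hcminpos x hx.1.le).le (norm_nonneg _)
        calc (cmin x / ‖H x‖) * V x ≤ (cmin x / ‖H x‖) * (‖H x‖ * Q x) :=
              mul_le_mul_of_nonneg_left (hVup x) hknn
        _ = cmin x * Q x := by
              rw [div_mul_eq_mul_div, mul_div_assoc, mul_div_cancel_left₀ _ (hnorm x hx.1.le).ne']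
        _ ≤ _ := hClow x hx.1.le
      have hexp : 0 < Real.exp (g x) := Real.exp_pos _
      nlinarith [hkv, hexp]
  have hWineq : V t * Real.exp (g t) ≤ V 0 := by
    have h : V t * Real.exp (g t) ≤ V 0 * Real.exp (g 0) :=
      hanti (Set.left_mem_Icc.mpr ht) ⟨ht, le_rfl⟩ ht
    have hg0 : g 0 = 0 := intervalIntegral.integral_same
    rwa [hg0, Real.exp_zero, mul_one] at h
  have h2 : V t ≤ V 0 * Real.exp (-(g t)) := by
    have h := mul_le_mul_of_nonneg_right hWineq (Real.exp_nonneg (-(g t)))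
    rwa [mul_assoc, ← Real.exp_add, add_neg_cancel, Real.exp_zero, mul_one] at h
  have h1 : hmin t * Q t ≤ V t := hVlow t ht
  have h3 : V 0 ≤ ‖H 0‖ * Q 0 := hVup 0
  have h4 : V 0 * Real.exp (-(g t)) ≤ ‖H 0‖ * Q 0 * Real.exp (-(g t)) :=
    mul_le_mul_of_nonneg_right h3 (Real.exp_nonneg _)
  show Q t ≤ ‖H 0‖ / hmin t * Q 0 * Real.exp (-(g t))
  rw [div_mul_eq_mul_div, div_mul_eq_mul_div, le_div_iff₀ (hhminpos t ht)]
  nlinarith [h1, h2, h4]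
end

section
/- Let H : [0,∞) → Matrix (Fin 2) (Fin 2) ℝ be continuous, symmetric positive definite with ‖H(t)‖ ≤ h_max, and let v : [0,∞) → ℝ² be differentiable with v' = (A(t) + ΔA(t))v, where H'(t) + H(t)A(t) + A(t)ᵀH(t) = -I. If ‖ΔA(t)‖ < 1/(2h_max) for all t, then d/dt ⟨H(t)v(t), v(t)⟩ ≤ -(1 - 2‖H(t)‖‖ΔA(t)‖)‖v(t)‖² and consequently ⟨H(t)v(t),v(t)⟩ ≤ ⟨H(0)v(0),v(0)⟩ exp(-∫₀ᵗ (1/‖H(s)‖ - 2‖ΔA(s)‖) ds). -/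
open Matrix intervalIntegral
open scoped Matrix.Norms.L2Operator

namespace PerturbedLyapAux

noncomputable def entryCLM (i j : Fin 2) : Matrix (Fin 2) (Fin 2) ℝ →L[ℝ] ℝ :=
  LinearMap.toContinuousLinearMap
    { toFun := fun M => M i j
      map_add' := fun _ _ => rfl
      map_smul' := fun _ _ => rfl }

lemma hasDerivAt_entry {H : ℝ → Matrix (Fin 2) (Fin 2) ℝ} {M : Matrix (Fin 2) (Fin 2) ℝ} {t : ℝ}
    (h : HasDerivAt H M t) (i j : Fin 2) :
    HasDerivAt (fun s => H s i j) (M i j) t := by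
  have := (entryCLM i j).hasFDerivAt.comp_hasDerivAt t h
  exact this

lemma dot_self_nonneg (x : Fin 2 → ℝ) : 0 ≤ x ⬝ᵥ x :=
  Finset.sum_nonneg fun _ _ => mul_self_nonneg _

lemma dot_eq_norm_sq (x : Fin 2 → ℝ) :
    x ⬝ᵥ x = ‖(EuclideanSpace.equiv (Fin 2) ℝ).symm x‖ ^ 2 := by
  rw [← real_inner_self_eq_norm_sq]
  simp [PiLp.inner_apply, dotProduct, RCLike.inner_apply]
  rw [EuclideanSpace.norm_eq, Real.sq_sqrt (by positivity)]; simp [Fin.sum_univ_two, sq]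

lemma mulVec_dot_le (M : Matrix (Fin 2) (Fin 2) ℝ) (x : Fin 2 → ℝ) :
    M.mulVec x ⬝ᵥ x ≤ ‖M‖ * (x ⬝ᵥ x) := by
  set y : EuclideanSpace ℝ (Fin 2) := (EuclideanSpace.equiv (Fin 2) ℝ).symm x with hy
  set z : EuclideanSpace ℝ (Fin 2) := (EuclideanSpace.equiv (Fin 2) ℝ).symm (M.mulVec x) with hz
  have h1 : M.mulVec x ⬝ᵥ x = inner ℝ z y := by
    simp [hy, hz, PiLp.inner_apply, dotProduct, RCLike.inner_apply]
    ring
  have h2 : ‖z‖ ≤ ‖M‖ * ‖y‖ := M.l2_opNorm_mulVec y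
  have h3 := real_inner_le_norm z y
  have h4 : x ⬝ᵥ x = ‖y‖ ^ 2 := dot_eq_norm_sq x
  nlinarith [norm_nonneg y, norm_nonneg z, norm_nonneg M]

lemma norm_transpose (M : Matrix (Fin 2) (Fin 2) ℝ) : ‖Mᵀ‖ = ‖M‖ := by
  have h : Mᵀ = Mᴴ := by ext i j; simp [Matrix.conjTranspose_apply]
  rw [h, Matrix.l2_opNorm_conjTranspose]

end PerturbedLyapAux

open PerturbedLyapAux

theorem perturbed_lyapunov_estimate
    (A ΔA H H' : ℝ → Matrix (Fin 2) (Fin 2) ℝ)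
    (hAcont : ContinuousOn A (Set.Ici 0)) (hΔAcont : ContinuousOn ΔA (Set.Ici 0))
    (hHcont : ContinuousOn H (Set.Ici 0))
    (hHderiv : ∀ t ≥ (0:ℝ), HasDerivAt H (H' t) t)
    (hlyap : ∀ t ≥ (0:ℝ), H' t + H t * A t + (A t)ᵀ * H t = -(1 : Matrix (Fin 2) (Fin 2) ℝ))
    (hHsymm : ∀ t ≥ (0:ℝ), (H t)ᵀ = H t)
    (hHpos : ∀ t ≥ (0:ℝ), (H t).PosDef)
    (hmax : ℝ) (hHbound : ∀ t ≥ (0:ℝ), ‖H t‖ ≤ hmax)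
    (hΔAsmall : ∀ t ≥ (0:ℝ), ‖ΔA t‖ < 1 / (2 * hmax))
    (v v' : ℝ → Fin 2 → ℝ)
    (hvderiv : ∀ t ≥ (0:ℝ), HasDerivAt v (v' t) t)
    (hvsol : ∀ t ≥ (0:ℝ), v' t = (A t + ΔA t).mulVec (v t)) :
    (∀ t ≥ (0:ℝ), ∃ d : ℝ,
        HasDerivAt (fun s => (H s).mulVec (v s) ⬝ᵥ v s) d t ∧
        d ≤ -(1 - 2 * ‖H t‖ * ‖ΔA t‖) * (v t ⬝ᵥ v t)) ∧
    (∀ t ≥ (0:ℝ),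
        (H t).mulVec (v t) ⬝ᵥ v t
          ≤ ((H 0).mulVec (v 0) ⬝ᵥ v 0)
              * Real.exp (-∫ s in (0:ℝ)..t, (1 / ‖H s‖ - 2 * ‖ΔA s‖))) := by
  -- hmax is positive
  have hmaxpos : 0 < hmax := by
    by_contra hc
    push_neg at hc
    have h1 := hΔAsmall 0 le_rfl
    have h2 : 1 / (2 * hmax) ≤ 0 :=
      div_nonpos_of_nonneg_of_nonpos one_pos.le (by linarith)
    exact absurd (lt_of_le_of_lt (norm_nonneg _) h1) (not_lt.2 h2)
  set f : ℝ → ℝ := fun s => (H s).mulVec (v s) ⬝ᵥ v s with hfdef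
  set D : ℝ → ℝ := fun t => (H' t).mulVec (v t) ⬝ᵥ v t + (H t).mulVec (v' t) ⬝ᵥ v t
      + (H t).mulVec (v t) ⬝ᵥ v' t with hDdef
  -- derivative of f
  have hderiv : ∀ t ≥ (0:ℝ), HasDerivAt f (D t) t := by
    intro t ht
    have hV : ∀ i, HasDerivAt (fun s => v s i) (v' t i) t := hasDerivAt_pi.mp (hvderiv t ht)
    have hHij : ∀ i j, HasDerivAt (fun s => H s i j) (H' t i j) t :=
      fun i j => hasDerivAt_entry (hHderiv t ht) i j
    have key : HasDerivAt (fun s => ∑ i, (∑ j, H s i j * v s j) * v s i)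
        (∑ i, ((∑ j, (H' t i j * v t j + H t i j * v' t j)) * v t i
            + (∑ j, H t i j * v t j) * v' t i)) t := by
      apply HasDerivAt.fun_sum
      intro i _
      exact (HasDerivAt.fun_sum (fun j _ => (hHij i j).mul (hV j))).mul (hV i)
    have hfeq : f = fun s => ∑ i, (∑ j, H s i j * v s j) * v s i := by
      funext s
      simp [hfdef, Matrix.mulVec, dotProduct]
    have hDeq : D t = ∑ i, ((∑ j, (H' t i j * v t j + H t i j * v' t j)) * v t i
        + (∑ j, H t i j * v t j) * v' t i) := by
      simp [hDdef, Matrix.mulVec, dotProduct, Fin.sum_univ_two]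
      ring
    rw [hfeq, hDeq]
    exact key
  -- rewrite the derivative value
  have hDeq2 : ∀ t ≥ (0:ℝ), D t = -(v t ⬝ᵥ v t)
      + ((H t * ΔA t).mulVec (v t) ⬝ᵥ v t + ((ΔA t)ᵀ * H t).mulVec (v t) ⬝ᵥ v t) := by
    intro t ht
    have h1 : H' t = -(1 : Matrix (Fin 2) (Fin 2) ℝ) - H t * A t - (A t)ᵀ * H t := by
      have h := hlyap t ht
      calc H' t = (H' t + H t * A t + (A t)ᵀ * H t) - H t * A t - (A t)ᵀ * H t := by abel
        _ = -(1 : Matrix (Fin 2) (Fin 2) ℝ) - H t * A t - (A t)ᵀ * H t := by rw [h]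
    rw [hDdef]
    simp only [h1, hvsol t ht]
    simp [Matrix.mulVec, dotProduct, Matrix.mul_apply, Matrix.sub_apply, Matrix.neg_apply,
      Matrix.one_apply, Matrix.add_apply, Matrix.transpose_apply, Fin.sum_univ_two]
    ring
  -- bound the derivative
  have hbound : ∀ t ≥ (0:ℝ), D t ≤ -(1 - 2 * ‖H t‖ * ‖ΔA t‖) * (v t ⬝ᵥ v t) := by
    intro t ht
    rw [hDeq2 t ht]
    have q0 : 0 ≤ v t ⬝ᵥ v t := dot_self_nonneg _
    have e1 : (H t * ΔA t).mulVec (v t) ⬝ᵥ v t ≤ ‖H t‖ * ‖ΔA t‖ * (v t ⬝ᵥ v t) :=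
      le_trans (mulVec_dot_le _ _)
        (mul_le_mul_of_nonneg_right (norm_mul_le _ _) q0)
    have e2 : ((ΔA t)ᵀ * H t).mulVec (v t) ⬝ᵥ v t ≤ ‖ΔA t‖ * ‖H t‖ * (v t ⬝ᵥ v t) := by
      refine le_trans (mulVec_dot_le _ _) (mul_le_mul_of_nonneg_right ?_ q0)
      calc ‖(ΔA t)ᵀ * H t‖ ≤ ‖(ΔA t)ᵀ‖ * ‖H t‖ := norm_mul_le _ _
        _ = ‖ΔA t‖ * ‖H t‖ := by rw [PerturbedLyapAux.norm_transpose]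
    nlinarith
  constructor
  · intro t ht
    exact ⟨D t, hderiv t ht, hbound t ht⟩
  · intro t ht
    set g : ℝ → ℝ := fun s => 1 / ‖H s‖ - 2 * ‖ΔA s‖ with hgdef
    have hHne : ∀ s ∈ Set.Ici (0:ℝ), (fun s => ‖H s‖) s ≠ 0 := by
      intro s hs
      have hdet := (hHpos s hs).det_pos
      have hne : H s ≠ 0 := by
        intro h0
        rw [h0] at hdet
        simp at hdet
      simpa using norm_ne_zero_iff.2 hne
    have hHnormpos : ∀ s ≥ (0:ℝ), 0 < ‖H s‖ := by
      intro s hs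
      exact lt_of_le_of_ne (norm_nonneg _) (Ne.symm (hHne s hs))
    have hgcont : ContinuousOn g (Set.Ici 0) := by
      exact (continuousOn_const.div hHcont.norm hHne).sub
        (continuousOn_const.mul hΔAcont.norm)
    set F : ℝ → ℝ := fun s => ∫ u in (0:ℝ)..s, g u with hFdef
    set φ : ℝ → ℝ := fun s => f s * Real.exp (F s) with hφdef
    have hIccsub : Set.Icc (0:ℝ) t ⊆ Set.Ici 0 := fun x hx => hx.1
    have huIcc : Set.uIcc (0:ℝ) t = Set.Icc 0 t := Set.uIcc_of_le ht
    -- continuity of φ on Icc 0 t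
    have hfcont : ContinuousOn f (Set.Icc 0 t) := fun s hs =>
      ((hderiv s hs.1).continuousAt).continuousWithinAt
    have hFcont : ContinuousOn F (Set.Icc 0 t) := by
      have hi : MeasureTheory.IntegrableOn g (Set.uIcc 0 t) MeasureTheory.volume := by
        rw [huIcc]
        exact (hgcont.mono hIccsub).integrableOn_Icc
      have := intervalIntegral.continuousOn_primitive_interval hi
      rwa [huIcc] at this
    have hφcont : ContinuousOn φ (Set.Icc 0 t) :=
      hfcont.mul (Real.continuous_exp.comp_continuousOn hFcont)
    -- derivative of φ on the interior
    have hφderiv : ∀ x ∈ Set.Ioo (0:ℝ) t,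
        HasDerivAt φ (D x * Real.exp (F x) + f x * (Real.exp (F x) * g x)) x := by
      intro x hx
      have hx0 : (0:ℝ) ≤ x := hx.1.le
      have hFd : HasDerivAt F (g x) x := by
        apply intervalIntegral.integral_hasDerivAt_right
        · apply ContinuousOn.intervalIntegrable
          apply hgcont.mono
          rw [Set.uIcc_of_le hx0]
          exact fun y hy => hy.1
        · exact (hgcont.mono Set.Ioi_subset_Ici_self).stronglyMeasurableAtFilter
            isOpen_Ioi x hx.1
        · exact (hgcont x hx0).continuousAt (Ici_mem_nhds hx.1)
      exact (hderiv x hx0).mul hFd.exp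
    have hφ'le : ∀ x ∈ Set.Ioo (0:ℝ) t, deriv φ x ≤ 0 := by
      intro x hx
      have hx0 : (0:ℝ) ≤ x := hx.1.le
      rw [(hφderiv x hx).deriv]
      set hn := ‖H x‖ with hn_def
      set an := ‖ΔA x‖ with an_def
      set q := v x ⬝ᵥ v x with q_def
      have hq0 : 0 ≤ q := dot_self_nonneg _
      have hnpos : 0 < hn := hHnormpos x hx0
      have hfle : f x ≤ hn * q := mulVec_dot_le _ _
      have hf0 : 0 ≤ f x := by
        have := ((hHpos x hx0).posSemidef).dotProduct_mulVec_nonneg (v x)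
        simpa [hfdef, dotProduct_comm] using this
      have hDle : D x ≤ -(1 - 2 * hn * an) * q := hbound x hx0
      have han0 : 0 ≤ an := norm_nonneg _
      have hanlt : an < 1 / (2 * hmax) := hΔAsmall x hx0
      have hnle : hn ≤ hmax := hHbound x hx0
      have hsmall : 2 * an * hn < 1 := by
        have h1 : an * (2 * hmax) < 1 := (lt_div_iff₀ (by positivity)).mp hanlt
        nlinarith
      have hgx : g x = 1 / hn - 2 * an := rfl
      have hgpos : 0 ≤ g x := by
        rw [hgx]
        rw [sub_nonneg, le_div_iff₀ hnpos]
        nlinarith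
      have hinv : (1 / hn) * hn = 1 := one_div_mul_cancel (ne_of_gt hnpos)
      have hsum : D x + f x * g x ≤ 0 := by
        have h5 : f x * g x ≤ (hn * q) * g x := mul_le_mul_of_nonneg_right hfle hgpos
        have h6 : (hn * q) * g x = (1 - 2 * an * hn) * q := by
          rw [hgx]; field_simp
        nlinarith
      have hexp : 0 < Real.exp (F x) := Real.exp_pos _
      nlinarith
    have hφdiff : DifferentiableOn ℝ φ (interior (Set.Icc 0 t)) := by
      rw [interior_Icc]
      exact fun x hx => (hφderiv x hx).differentiableAt.differentiableWithinAt
    have hanti : AntitoneOn φ (Set.Icc 0 t) := by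
      apply antitoneOn_of_deriv_nonpos (convex_Icc 0 t) hφcont hφdiff
      rw [interior_Icc]
      exact hφ'le
    have hφt : φ t ≤ φ 0 :=
      hanti (Set.left_mem_Icc.2 ht) (Set.right_mem_Icc.2 ht) ht
    have hφ0 : φ 0 = f 0 := by
      simp [hφdef, hFdef, intervalIntegral.integral_same]
    rw [hφ0] at hφt
    -- conclude
    have hexppos : (0:ℝ) < Real.exp (-F t) := Real.exp_pos _
    have h7 := mul_le_mul_of_nonneg_right hφt hexppos.le
    have h8 : f t * Real.exp (F t) * Real.exp (-F t) = f t := by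
      rw [mul_assoc, ← Real.exp_add]
      simp
    rw [h8] at h7
    exact h7
end

section
/- Let ψ : [0,∞) → (0,∞) be differentiable and suppose ψ'(t) ≤ -a(t) ψ(t) + q ψ(t)^{3/2}, where a(t) ≥ a₀ > 0 and q > 0. If ψ(0)^{1/2} < a₀/q · (1/2), then ψ(t) ≤ 4 ψ(0) exp(-∫₀ᵗ a(s)/2 ds) for all t ≥ 0 — more precisely, the differential inequality for ψ^{-1/2} gives exp(-∫₀ᵗ a(τ)/2 dτ) ψ(t)^{-1/2} ≥ ψ(0)^{-1/2} - (q/2)∫₀ᵗ exp(-∫₀^τ a(ξ)/2 dξ) dτ. -/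
open intervalIntegral MeasureTheory Set

set_option maxHeartbeats 1000000 in
theorem nonlinear_comparison (ψ ψ' a : ℝ → ℝ) (a₀ q : ℝ)
    (hψpos : ∀ t ≥ (0:ℝ), 0 < ψ t)
    (hψderiv : ∀ t ≥ (0:ℝ), HasDerivAt ψ (ψ' t) t)
    (hineq : ∀ t ≥ (0:ℝ), ψ' t ≤ -a t * ψ t + q * (ψ t * Real.sqrt (ψ t)))
    (ha : ∀ t ≥ (0:ℝ), a t ≥ a₀) (ha₀ : 0 < a₀) (hq : 0 < q)
    (haint : ∀ t ≥ (0:ℝ), IntervalIntegrable a MeasureTheory.volume 0 t)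
    (hsmall : Real.sqrt (ψ 0) < a₀ / q * (1 / 2)) :
    ∀ t ≥ (0:ℝ),
      ψ t ≤ 4 * ψ 0 * Real.exp (-∫ s in (0:ℝ)..t, a s / 2) ∧
      Real.exp (-∫ τ in (0:ℝ)..t, a τ / 2) * (Real.sqrt (ψ t))⁻¹
        ≥ (Real.sqrt (ψ 0))⁻¹
            - (q / 2) * ∫ τ in (0:ℝ)..t, Real.exp (-∫ ξ in (0:ℝ)..τ, a ξ / 2) := by
  -- notation
  set w : ℝ → ℝ := fun x => (Real.sqrt (ψ x))⁻¹ with hw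
  set A : ℝ → ℝ := fun x => ∫ s in (0:ℝ)..x, a s / 2 with hA
  set E : ℝ → ℝ := fun x => Real.exp (-A x) with hE
  set B : ℝ → ℝ := fun x => ∫ τ in (0:ℝ)..x, E τ with hB
  -- basic positivity
  have hs : ∀ x ≥ (0:ℝ), 0 < Real.sqrt (ψ x) := fun x hx => Real.sqrt_pos.2 (hψpos x hx)
  have hwpos : ∀ x ≥ (0:ℝ), 0 < w x := fun x hx => inv_pos.2 (hs x hx)
  -- derivative of w
  set w' : ℝ → ℝ := fun x => -(1 / (2 * Real.sqrt (ψ x)) * ψ' x) / (Real.sqrt (ψ x)) ^ 2 with hw'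
  have hwderiv : ∀ x ≥ (0:ℝ), HasDerivAt w (w' x) x := by
    intro x hx
    have h1 := (Real.hasDerivAt_sqrt (hψpos x hx).ne').comp x (hψderiv x hx)
    exact h1.inv (Real.sqrt_ne_zero'.2 (hψpos x hx))
  -- differential inequality for w
  have hw'ineq : ∀ x ≥ (0:ℝ), a x / 2 * w x - q / 2 ≤ w' x := by
    intro x hx
    have hsx := hs x hx
    have hpx := hψpos x hx
    have hsq : Real.sqrt (ψ x) ^ 2 = ψ x := Real.sq_sqrt hpx.le
    have key : a x * ψ x - q * (ψ x * Real.sqrt (ψ x)) ≤ -ψ' x := by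
      have := hineq x hx; linarith
    have hRHS : w' x = -ψ' x / (2 * Real.sqrt (ψ x) * ψ x) := by
      simp only [hw']
      rw [← hsq]
      field_simp
      rw [Real.sqrt_sq hsx.le]
    rw [hRHS]
    simp only [hw]
    rw [le_div_iff₀ (by positivity)]
    have expand : (a x / 2 * (Real.sqrt (ψ x))⁻¹ - q / 2) * (2 * Real.sqrt (ψ x) * ψ x)
        = a x * ψ x * ((Real.sqrt (ψ x))⁻¹ * Real.sqrt (ψ x)) - q * (ψ x * Real.sqrt (ψ x)) := by
      ring
    rw [expand, inv_mul_cancel₀ hsx.ne', mul_one]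
    exact key
  have hwcont : ContinuousOn w (Ici 0) := fun x hx =>
    ((hwderiv x hx).continuousAt).continuousWithinAt
  -- w + (q/2) x is monotone on [0,∞)
  have hmono : ∀ s t : ℝ, 0 ≤ s → s ≤ t → w s + q / 2 * s ≤ w t + q / 2 * t := by
    have H : MonotoneOn (fun x => w x + q / 2 * x) (Ici 0) := by
      apply monotoneOn_of_hasDerivWithinAt_nonneg (convex_Ici 0)
        (hwcont.add (continuousOn_const.mul continuousOn_id))
        (f' := fun x => w' x + q / 2)
      · intro x hx
        rw [interior_Ici] at hx
        have hd1 : HasDerivAt (fun y => w y + q / 2 * y) (w' x + q / 2) x := by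
          have := (hwderiv x hx.le).add ((hasDerivAt_id x).const_mul (q / 2))
          exact this.congr_deriv (by ring)
        exact hd1.hasDerivWithinAt
      · intro x hx
        rw [interior_Ici] at hx
        have h1 := hw'ineq x hx.le
        have h2 : 0 ≤ a x / 2 * w x :=
          mul_nonneg (by linarith [ha x hx.le]) (hwpos x hx.le).le
        linarith
    intro s t hsnn hst
    exact H (mem_Ici.2 hsnn) (mem_Ici.2 (hsnn.trans hst)) hst
  -- integrability of a on subintervals of [0,∞)
  have haint2' : ∀ s t : ℝ, 0 ≤ s → 0 ≤ t → IntervalIntegrable (fun τ => a τ / 2) volume s t :=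
    fun s t hsnn htnn => (((haint s hsnn).symm.trans (haint t htnn)).div_const 2)
  -- A increments
  have hA0 : A 0 = 0 := integral_same
  have hAadd : ∀ s t : ℝ, 0 ≤ s → 0 ≤ t → A t - A s = ∫ τ in s..t, a τ / 2 := by
    intro s t hsnn htnn
    have h := integral_add_adjacent_intervals (haint2' 0 s le_rfl hsnn) (haint2' s t hsnn htnn)
    simp only [hA]
    linarith [h]
  have hAmono : ∀ s t : ℝ, 0 ≤ s → s ≤ t → A s ≤ A t := by
    intro s t hsnn hst
    have h1 : (0:ℝ) ≤ ∫ τ in s..t, a τ / 2 := by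
      apply intervalIntegral.integral_nonneg hst
      intro u hu
      have := ha u (hsnn.trans hu.1)
      linarith
    have := hAadd s t hsnn (hsnn.trans hst)
    linarith
  have hAnonneg : ∀ t ≥ (0:ℝ), 0 ≤ A t := by
    intro t ht; have := hAmono 0 t le_rfl ht; rw [hA0] at this; exact this
  have hAlb : ∀ t ≥ (0:ℝ), a₀ / 2 * t ≤ A t := by
    intro t ht
    have h1 : ∫ τ in (0:ℝ)..t, a₀ / 2 ≤ ∫ τ in (0:ℝ)..t, a τ / 2 := by
      apply intervalIntegral.integral_mono_on ht intervalIntegrable_const (haint2' 0 t le_rfl ht)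
      intro u hu; have := ha u hu.1; linarith
    rw [intervalIntegral.integral_const, smul_eq_mul, sub_zero] at h1
    simp only [hA]
    linarith
  have hAcont : ∀ T ≥ (0:ℝ), ContinuousOn A (Icc 0 T) := by
    intro T hT
    have := continuousOn_primitive_interval' (haint2' 0 T le_rfl hT)
      (left_mem_uIcc (a := (0:ℝ)) (b := T))
    rwa [uIcc_of_le hT] at this
  have hEpos : ∀ x, 0 < E x := fun x => Real.exp_pos _
  have hEle1 : ∀ x ≥ (0:ℝ), E x ≤ 1 := by
    intro x hx
    simp only [hE]
    rw [show (1:ℝ) = Real.exp 0 by rw [Real.exp_zero]]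
    exact Real.exp_le_exp.2 (by linarith [hAnonneg x hx])
  have hEanti : ∀ s t : ℝ, 0 ≤ s → s ≤ t → E t ≤ E s := by
    intro s t hsnn hst
    exact Real.exp_le_exp.2 (by linarith [hAmono s t hsnn hst])
  have hEcont : ∀ T ≥ (0:ℝ), ContinuousOn E (Icc 0 T) := fun T hT =>
    Real.continuous_exp.comp_continuousOn ((hAcont T hT).neg)
  have hEint : ∀ s t : ℝ, 0 ≤ s → 0 ≤ t → IntervalIntegrable E volume s t := by
    intro s t hsnn htnn
    rcases le_total s t with h | h
    · exact ((hEcont t htnn).mono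
        (by rw [uIcc_of_le h]; exact Icc_subset_Icc hsnn le_rfl)).intervalIntegrable
    · exact ((hEcont s hsnn).mono
        (by rw [uIcc_of_ge h]; exact Icc_subset_Icc htnn le_rfl)).intervalIntegrable
  have hBadd : ∀ s t : ℝ, 0 ≤ s → 0 ≤ t → B t - B s = ∫ τ in s..t, E τ := by
    intro s t hsnn htnn
    have h := integral_add_adjacent_intervals (hEint 0 s le_rfl hsnn) (hEint s t hsnn htnn)
    simp only [hB]
    linarith [h]
  -- the fundamental integral inequality for w
  have hkey : ∀ t u : ℝ, 0 ≤ t → t ≤ u →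
      (∫ τ in t..u, (a τ / 2 * w τ - q / 2)) ≤ w u - w t := by
    intro t u htnn htu
    have hIcc : Icc t u ⊆ Ici (0:ℝ) := fun x hx => htnn.trans hx.1
    have hint : IntervalIntegrable (fun τ => a τ / 2 * w τ - q / 2) volume t u := by
      apply IntervalIntegrable.sub _ intervalIntegrable_const
      apply (haint2' t u htnn (htnn.trans htu)).mul_continuousOn
      rw [uIcc_of_le htu]
      exact hwcont.mono hIcc
    apply intervalIntegral.integral_le_sub_of_hasDeriv_right_of_le htu
      (hwcont.mono hIcc)
      (fun x hx => ((hwderiv x (htnn.trans hx.1.le)).hasDerivWithinAt))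
      ((intervalIntegrable_iff_integrableOn_Icc_of_le htu).1 hint)
      (fun x hx => hw'ineq x (htnn.trans hx.1.le))
  -- main part : F(x) = E x * w x + (q/2) B x satisfies F 0 ≤ F T
  set F : ℝ → ℝ := fun x => E x * w x + q / 2 * B x with hF
  have main : ∀ T ≥ (0:ℝ), F 0 ≤ F T := by
    intro T hT
    have hclaim : ∀ ε > (0:ℝ), F 0 - ε * (T + A T) ≤ F T := by
      intro ε hε
      set S : Set ℝ := {x | F 0 - ε * (x + A x) ≤ F x} with hS
      have hFcont : ContinuousOn F (Icc 0 T) := by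
        simp only [hF]
        apply ContinuousOn.add
        · exact (hEcont T hT).mul (hwcont.mono (fun x hx => hx.1))
        · apply continuousOn_const.mul
          have := continuousOn_primitive_interval' (hEint 0 T le_rfl hT)
            (left_mem_uIcc (a := (0:ℝ)) (b := T))
          rw [uIcc_of_le hT] at this
          exact this
      have hsub : Icc 0 T ⊆ S := by
        apply IsClosed.Icc_subset_of_forall_exists_gt
        · -- closedness
          have hc : ContinuousOn (fun x => (F 0 - ε * (x + A x), F x)) (Icc 0 T) :=
            ((continuousOn_const.sub (continuousOn_const.mul
              (continuousOn_id.add (hAcont T hT)))).prodMk hFcont)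
          have heq : S ∩ Icc 0 T = Icc 0 T ∩
              ((fun x => (F 0 - ε * (x + A x), F x)) ⁻¹' {p : ℝ × ℝ | p.1 ≤ p.2}) := by
            ext x
            simp only [hS, mem_inter_iff, mem_setOf_eq, mem_preimage]
            tauto
          rw [heq]
          exact hc.preimage_isClosed_of_isClosed isClosed_Icc
            (isClosed_le continuous_fst continuous_snd)
        · simp only [hS, mem_setOf_eq, hA0]
          norm_num
        · -- induction step
          rintro t ⟨htS, ht0, htT⟩ v hv
          set m := min v T with hm
          have htm : t < m := lt_min hv htT
          have hmT : m ≤ T := min_le_right _ _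
          have hwtEt : 0 ≤ w t * E t := le_of_lt (mul_pos (hwpos t ht0) (hEpos t))
          set δ : ℝ := min (ε / (w t * E t + 1)) (2 * ε / q) with hδ
          have hδpos : 0 < δ :=
            lt_min (div_pos hε (by linarith)) (div_pos (by linarith) hq)
          -- find u close to t on the right
          have hne : (nhdsWithin t (Ioc t m)).NeBot := by
            rw [← mem_closure_iff_nhdsWithin_neBot, closure_Ioc htm.ne]
            exact ⟨le_rfl, htm.le⟩
          have htend : Filter.Tendsto A (nhdsWithin t (Ioc t m)) (nhds (A t)) := by
            have h1 : ContinuousWithinAt A (Icc 0 T) t := (hAcont T hT) t ⟨ht0, htT.le⟩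
            exact h1.mono (fun x hx => ⟨ht0.trans hx.1.le, hx.2.trans hmT⟩)
          have hev1 : ∀ᶠ x in nhdsWithin t (Ioc t m), A x < A t + δ :=
            htend.eventually_lt_const (by linarith)
          have hev2 : ∀ᶠ x in nhdsWithin t (Ioc t m), x ∈ Ioc t m :=
            eventually_mem_nhdsWithin
          obtain ⟨u, hu1, hu2⟩ := (hev1.and hev2).exists
          refine ⟨u, ?_, hu2.1, hu2.2.trans (min_le_left _ _)⟩
          -- show u ∈ S
          have htu : t ≤ u := hu2.1.le
          have hu0 : 0 ≤ u := ht0.trans htu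
          have huT : u ≤ T := hu2.2.trans hmT
          set Δ : ℝ := A u - A t with hΔ
          have hΔ0 : 0 ≤ Δ := by rw [hΔ]; linarith [hAmono t u ht0 htu]
          have hΔδ : Δ ≤ δ := by rw [hΔ]; linarith [hu1]
          set d : ℝ := u - t with hd
          have hd0 : 0 ≤ d := by rw [hd]; linarith
          -- integral inequality on [t,u]
          set c : ℝ := w t - q / 2 * d with hc
          clear_value Δ d c
          have hwlb : ∀ τ ∈ Icc t u, c ≤ w τ := by
            intro τ hτ
            have h1 := hmono t τ ht0 hτ.1
            rw [hc, hd]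
            have hqu : 0 ≤ q * (u - τ) := mul_nonneg hq.le (by linarith [hτ.2])
            linarith [h1, hqu]
          have hintlb : c * Δ - q / 2 * d ≤ ∫ τ in t..u, (a τ / 2 * w τ - q / 2) := by
            have hint1 : IntervalIntegrable (fun τ => a τ / 2 * w τ - q / 2) volume t u := by
              apply IntervalIntegrable.sub _ intervalIntegrable_const
              apply (haint2' t u ht0 hu0).mul_continuousOn
              rw [uIcc_of_le htu]
              exact hwcont.mono (fun x hx => ht0.trans hx.1)
            have hint2 : IntervalIntegrable (fun τ => a τ / 2 * c - q / 2) volume t u :=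
              IntervalIntegrable.sub ((haint2' t u ht0 hu0).mul_const c) intervalIntegrable_const
            have hmono2 : ∫ τ in t..u, (a τ / 2 * c - q / 2) ≤
                ∫ τ in t..u, (a τ / 2 * w τ - q / 2) := by
              apply intervalIntegral.integral_mono_on htu hint2 hint1
              intro x hx
              have h1 : 0 ≤ a x / 2 := by have := ha x (ht0.trans hx.1); linarith
              have h2 := hwlb x hx
              linarith [mul_nonneg h1 (sub_nonneg.2 h2)]
            have hval : ∫ τ in t..u, (a τ / 2 * c - q / 2) = c * Δ - q / 2 * d := by
              rw [intervalIntegral.integral_sub ((haint2' t u ht0 hu0).mul_const c)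
                intervalIntegrable_const,
                intervalIntegral.integral_mul_const, intervalIntegral.integral_const,
                hΔ, hd, ← hAadd t u ht0 hu0, smul_eq_mul]
              ring
            linarith
          have k3 : w t + (c * Δ - q / 2 * d) ≤ w u := by
            have := hkey t u ht0 htu
            linarith
          -- exponential estimates
          have k4 : E t * (1 - Δ) ≤ E u := by
            have h1 : (1:ℝ) - Δ ≤ Real.exp (-Δ) := by
              have := Real.add_one_le_exp (-Δ); linarith
            have h2 : E u = E t * Real.exp (-Δ) := by
              simp only [hE, ← Real.exp_add]
              congr 1
              rw [hΔ]; ring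
            calc E t * (1 - Δ) ≤ E t * Real.exp (-Δ) :=
                  mul_le_mul_of_nonneg_left h1 (hEpos t).le
              _ = E u := h2.symm
          have k6 : E u ≤ 1 := hEle1 u hu0
          have k7 : d * E u ≤ B u - B t := by
            rw [hBadd t u ht0 hu0]
            have h1 : ∫ τ in t..u, E u ≤ ∫ τ in t..u, E τ := by
              apply intervalIntegral.integral_mono_on htu intervalIntegrable_const
                (hEint t u ht0 hu0)
              intro x hx
              exact hEanti x u (ht0.trans hx.1) hx.2
            rw [intervalIntegral.integral_const, smul_eq_mul, ← hd] at h1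
            linarith
          -- small-quantity bounds
          have hδ1 : w t * E t * δ ≤ ε := by
            have h1 : δ ≤ ε / (w t * E t + 1) := min_le_left _ _
            rw [le_div_iff₀ (by linarith)] at h1
            nlinarith [hδpos]
          have hδ2 : q / 2 * δ ≤ ε := by
            have h1 : δ ≤ 2 * ε / q := min_le_right _ _
            rw [le_div_iff₀ hq] at h1
            linarith
          have e2a : w t * E t * Δ ≤ ε := by nlinarith [hδ1, hΔδ, hwtEt]
          have e2 : E t * w t * (Δ * Δ) ≤ ε * Δ := by nlinarith [e2a, hΔ0]
          have e3a : q / 2 * Δ ≤ ε := by nlinarith [hδ2, hΔδ]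
          have e3b : q / 2 * d * Δ ≤ ε * d := by nlinarith [e3a, hd0]
          have e3 : E u * (q / 2 * d * Δ) ≤ ε * d := by
            have hnn : 0 ≤ q / 2 * d * Δ := mul_nonneg (mul_nonneg (by linarith) hd0) hΔ0
            calc E u * (q / 2 * d * Δ) ≤ 1 * (q / 2 * d * Δ) :=
                  mul_le_mul_of_nonneg_right k6 hnn
              _ = q / 2 * d * Δ := one_mul _
              _ ≤ ε * d := e3b
          -- the main per-step estimate
          have hstep : F t - ε * Δ - ε * d ≤ F u := by
            have hEu := (hEpos u).le
            have hwt := (hwpos t ht0).le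
            have e1 : E u * (w t + (c * Δ - q / 2 * d)) ≤ E u * w u :=
              mul_le_mul_of_nonneg_left k3 hEu
            have h_s1 : E u * (w t + (c * Δ - q / 2 * d))
                = E u * w t + E u * (w t * Δ) - E u * (q / 2 * d * Δ) - E u * (q / 2 * d) := by
              rw [hc]; ring
            have s2 : q / 2 * (d * E u) ≤ q / 2 * (B u - B t) :=
              mul_le_mul_of_nonneg_left k7 (by linarith)
            have hr1 : q / 2 * (d * E u) = E u * (q / 2 * d) := by ring
            have hr2 : q / 2 * (B u - B t) = q / 2 * B u - q / 2 * B t := by ring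
            have g0 : 0 ≤ w t * (1 + Δ) := by nlinarith [hwt, hΔ0]
            have g1 : E t * (1 - Δ) * (w t * (1 + Δ)) ≤ E u * (w t * (1 + Δ)) :=
              mul_le_mul_of_nonneg_right k4 g0
            have g2 : E t * (1 - Δ) * (w t * (1 + Δ)) = E t * w t - E t * w t * (Δ * Δ) := by
              ring
            have g4 : E u * (w t * (1 + Δ)) = E u * w t + E u * (w t * Δ) := by ring
            have s5 : E t * w t - ε * Δ ≤ E u * w t + E u * (w t * Δ) := by
              linarith [g1, g2, g4, e2]
            simp only [hF]
            linarith [e1, h_s1, s2, hr1, hr2, s5, e3]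
          -- conclude u ∈ S
          have hbudget : ε * (t + A t) + ε * Δ + ε * d = ε * (u + A u) := by
            rw [hΔ, hd]; ring
          have htS' : F 0 - ε * (t + A t) ≤ F t := htS
          rw [hS, mem_setOf_eq]
          linarith
      have h := hsub (right_mem_Icc.2 hT)
      rw [hS, mem_setOf_eq] at h
      exact h
    -- let ε → 0
    by_contra hcon
    push_neg at hcon
    have hd : 0 < F 0 - F T := by linarith
    have hTA : 0 ≤ T + A T := by linarith [hAnonneg T hT]
    have hε : (0:ℝ) < (F 0 - F T) / (T + A T + 1) := div_pos hd (by linarith)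
    have h1 := hclaim _ hε
    have h2 : (F 0 - F T) / (T + A T + 1) * (T + A T) < F 0 - F T := by
      rw [div_mul_eq_mul_div, div_lt_iff₀ (by linarith)]
      nlinarith
    linarith
  -- conclude
  intro t ht
  have hs0 : 0 < Real.sqrt (ψ 0) := hs 0 le_rfl
  have hst : 0 < Real.sqrt (ψ t) := hs t ht
  have hw0s : w 0 * Real.sqrt (ψ 0) = 1 := by
    simp only [hw]; exact inv_mul_cancel₀ hs0.ne'
  have hwts : w t * Real.sqrt (ψ t) = 1 := by
    simp only [hw]; exact inv_mul_cancel₀ hst.ne'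
  have hpart2 : w 0 - q / 2 * B t ≤ E t * w t := by
    have h0 := main t ht
    have hB0 : B 0 = 0 := integral_same
    have hE0 : E 0 = 1 := by simp only [hE, hA0, neg_zero, Real.exp_zero]
    simp only [hF] at h0
    rw [hB0, hE0] at h0
    linarith
  refine ⟨?_, hpart2⟩
  -- part 1
  have hBub : B t ≤ 2 / a₀ := by
    have h1 : ∀ x ∈ Icc (0:ℝ) t, E x ≤ Real.exp (-(a₀ / 2 * x)) := by
      intro x hx
      exact Real.exp_le_exp.2 (by linarith [hAlb x hx.1])
    have h2 : (∫ x in (0:ℝ)..t, E x) ≤ ∫ x in (0:ℝ)..t, Real.exp (-(a₀ / 2 * x)) :=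
      intervalIntegral.integral_mono_on ht (hEint 0 t le_rfl ht)
        ((Real.continuous_exp.comp ((continuous_const.mul continuous_id).neg)).intervalIntegrable 0 t) h1
    have h3 : ∫ x in (0:ℝ)..t, Real.exp (-(a₀ / 2 * x)) =
        -(2 / a₀) * Real.exp (-(a₀ / 2 * t)) - -(2 / a₀) * Real.exp (-(a₀ / 2 * 0)) := by
      apply intervalIntegral.integral_eq_sub_of_hasDerivAt
      · intro x _
        have h4 : HasDerivAt (fun y : ℝ => -(a₀ / 2 * y)) (-(a₀ / 2)) x := by
          exact (((hasDerivAt_id x).const_mul (a₀ / 2)).neg).congr_deriv (by ring)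
        have h5 := (Real.hasDerivAt_exp (-(a₀ / 2 * x))).comp x h4
        have h6 := h5.const_mul (-(2 / a₀))
        exact h6.congr_deriv (by
          rw [show -(2 / a₀) * (Real.exp (-(a₀ / 2 * x)) * -(a₀ / 2))
              = Real.exp (-(a₀ / 2 * x)) * (2 / a₀ * (a₀ / 2)) by ring,
            show 2 / a₀ * (a₀ / 2) = 1 by field_simp, mul_one])
      · exact (Real.continuous_exp.comp ((continuous_const.mul continuous_id).neg)).intervalIntegrable 0 t
    have h8 : Real.exp (-(a₀ / 2 * 0)) = 1 := by norm_num
    have hBt : B t = ∫ x in (0:ℝ)..t, E x := rfl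
    have h9 : 0 < 2 / a₀ := div_pos (by norm_num) ha₀
    rw [hBt]
    nlinarith [h2, h3, h8, mul_pos h9 (Real.exp_pos (-(a₀ / 2 * t)))]
  have hkey0 : Real.sqrt (ψ 0) * (2 * q) < a₀ := by
    have hmul := mul_lt_mul_of_pos_right hsmall (by linarith : (0:ℝ) < 2 * q)
    calc Real.sqrt (ψ 0) * (2 * q) < a₀ / q * (1 / 2) * (2 * q) := hmul
      _ = a₀ := by field_simp
  have h2q : 2 * q * (w 0 * Real.sqrt (ψ 0)) = 2 * q := by rw [hw0s]; ring
  have hq2' : 2 * q < a₀ * w 0 := by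
    nlinarith [hkey0, hwpos 0 le_rfl, h2q]
  have hq2 : q / a₀ < w 0 / 2 := by
    rw [div_lt_div_iff₀ ha₀ two_pos]
    linarith
  have hq3 : q / 2 * B t ≤ q / a₀ := by
    have h1 := mul_le_mul_of_nonneg_left hBub (by linarith : (0:ℝ) ≤ q / 2)
    have h2 : q / 2 * (2 / a₀) = q / a₀ := by
      field_simp
    linarith
  have hmain : w 0 / 2 ≤ E t * w t := by linarith [hpart2, hq3, hq2]
  have m1 : w 0 / 2 * Real.sqrt (ψ t) ≤ E t := by
    have hmm := mul_le_mul_of_nonneg_right hmain hst.le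
    calc w 0 / 2 * Real.sqrt (ψ t) ≤ E t * w t * Real.sqrt (ψ t) := hmm
      _ = E t * (w t * Real.sqrt (ψ t)) := by ring
      _ = E t := by rw [hwts, mul_one]
  have m2 := mul_le_mul_of_nonneg_right m1
    (by positivity : (0:ℝ) ≤ 2 * Real.sqrt (ψ 0))
  have h1 : Real.sqrt (ψ t) ≤ E t * (2 * Real.sqrt (ψ 0)) := by
    have hmm : w 0 / 2 * Real.sqrt (ψ t) * (2 * Real.sqrt (ψ 0))
        = Real.sqrt (ψ t) * (w 0 * Real.sqrt (ψ 0)) := by ring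
    rw [hmm, hw0s, mul_one] at m2
    exact m2
  have hsqt : Real.sqrt (ψ t) * Real.sqrt (ψ t) = ψ t := Real.mul_self_sqrt (hψpos t ht).le
  have hsq0 : Real.sqrt (ψ 0) * Real.sqrt (ψ 0) = ψ 0 := Real.mul_self_sqrt (hψpos 0 le_rfl).le
  have h4 : ψ t ≤ 4 * ψ 0 * (E t * E t) := by
    have hh := mul_self_le_mul_self hst.le h1
    nlinarith [hh, hsqt, hsq0]
  have h5 : E t * E t ≤ E t := by
    nlinarith [hEle1 t ht, (hEpos t).le]
  have hψ0nn := (hψpos 0 le_rfl).le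
  nlinarith [h4, h5, hψ0nn, (hEpos t).le]
end
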